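/- Let C₁,…,C₁₄ be the fourteen explicit 7×7 real matrices: C₁ = −E₄₇ − E₅₆ + E₆₅ + E₇₄; C₂ = E₄₆ − E₅₇ − E₆₄ + E₇₅; C₃ = −E₄₅ + E₅₄ − E₆₇ + E₇₆; C₄ = E₂₇ + E₃₆ − E₆₃ − E₇₂; C₅ = −E₂₆ + E₃₇ + E₆₂ − E₇₃; C₆ = E₂₅ − E₃₄ + E₄₃ − E₅₂; C₇ = −E₂₄ − E₃₅ + E₄₂ + E₅₃; C₈ = (1/√3)(−2E₂₃ + 2E₃₂ + E₄₅ − E₅₄ − E₆₇ + E₇₆); C₉ = (1/√3)(−2E₁₂ + 2E₂₁ + E₄₇ − E₅₆ + E₆₅ − E₇₄); C₁₀ = (1/√3)(−2E₁₃ + 2E₃₁ − E₄₆ − E₅₇ + E₆₄ + E₇₅); C₁₁ = (1/√3)(−2E₁₄ − E₂₇ + E₃₆ + 2E₄₁ − E₆₃ + E₇₂); C₁₂ = (1/√3)(−2E₁₅ + E₂₆ + E₃₇ + 2E₅₁ − E₆₂ − E₇₃); C₁₃ = (1/√3)(−2E₁₆ − E₂₅ − E₃₄ + E₄₃ + E₅₂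 + 2E₆₁); C₁₄ = (1/√3)(−2E₁₇ + E₂₄ − E₃₅ − E₄₂ + E₅₃ + 2E₇₁). Then the matrices C₁,…,C₁₄ are linearly independent over ℝ, their real span is closed under the matrix commutator ⁅X,Y⁆ = XY − YX (hence is a 14-dimensional real Lie subalgebra of the 7×7 real matrices, the compact Lie algebra g₂ in its 7-dimensional representation), and the Killing form of this Lie algebra is negative definite. -/

import Mathlib

open Matrix

attribute [local instance 100] LieRing.ofAssociativeRing

/-- `E i j` is the 7×7 real matrix with a single 1 in position `(i,j)` (0-indexed). -/
def E7 (i j : Fin 7) : Matrix (Fin 7) (Fin 7) ℝ := Matrix.single i j 1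

/-- The fourteen generators of the compact Lie algebra `g₂` in its 7-dimensional
representation (indices shifted to be 0-based). -/
noncomputable def g2C : Fin 14 → Matrix (Fin 7) (Fin 7) ℝ :=
  ![-E7 3 6 - E7 4 5 + E7 5 4 + E7 6 3,
    E7 3 5 - E7 4 6 - E7 5 3 + E7 6 4,
    -E7 3 4 + E7 4 3 - E7 5 6 + E7 6 5,
    E7 1 6 + E7 2 5 - E7 5 2 - E7 6 1,
    -E7 1 5 + E7 2 6 + E7 5 1 - E7 6 2,
    E7 1 4 - E7 2 3 + E7 3 2 - E7 4 1,
    -E7 1 3 - E7 2 4 + E7 3 1 + E7 4 2,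
    (1 / Real.sqrt 3) • (-(2 : ℝ) • E7 1 2 + (2 : ℝ) • E7 2 1 + E7 3 4 - E7 4 3 - E7 5 6 + E7 6 5),
    (1 / Real.sqrt 3) • (-(2 : ℝ) • E7 0 1 + (2 : ℝ) • E7 1 0 + E7 3 6 - E7 4 5 + E7 5 4 - E7 6 3),
    (1 / Real.sqrt 3) • (-(2 : ℝ) • E7 0 2 + (2 : ℝ) • E7 2 0 - E7 3 5 - E7 4 6 + E7 5 3 + E7 6 4),
    (1 / Real.sqrt 3) • (-(2 : ℝ) • E7 0 3 - E7 1 6 + E7 2 5 + (2 : ℝ) • E7 3 0 - E7 5 2 + E7 6 1),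
    (1 / Real.sqrt 3) • (-(2 : ℝ) • E7 0 4 + E7 1 5 + E7 2 6 + (2 : ℝ) • E7 4 0 - E7 5 1 - E7 6 2),
    (1 / Real.sqrt 3) • (-(2 : ℝ) • E7 0 5 - E7 1 4 - E7 2 3 + E7 3 2 + E7 4 1 + (2 : ℝ) • E7 5 0),
    (1 / Real.sqrt 3) • (-(2 : ℝ) • E7 0 6 + E7 1 3 - E7 2 4 - E7 3 1 + E7 4 2 + (2 : ℝ) • E7 6 0)]

/-! ### Auxiliary integer data -/

def Ez (i j : Fin 7) : Matrix (Fin 7) (Fin 7) ℤ := Matrix.single i j 1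

def Dz : Fin 14 → Matrix (Fin 7) (Fin 7) ℤ :=
  ![-Ez 3 6 - Ez 4 5 + Ez 5 4 + Ez 6 3,
    Ez 3 5 - Ez 4 6 - Ez 5 3 + Ez 6 4,
    -Ez 3 4 + Ez 4 3 - Ez 5 6 + Ez 6 5,
    Ez 1 6 + Ez 2 5 - Ez 5 2 - Ez 6 1,
    -Ez 1 5 + Ez 2 6 + Ez 5 1 - Ez 6 2,
    Ez 1 4 - Ez 2 3 + Ez 3 2 - Ez 4 1,
    -Ez 1 3 - Ez 2 4 + Ez 3 1 + Ez 4 2,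
    -(2 : ℤ) • Ez 1 2 + (2 : ℤ) • Ez 2 1 + Ez 3 4 - Ez 4 3 - Ez 5 6 + Ez 6 5,
    -(2 : ℤ) • Ez 0 1 + (2 : ℤ) • Ez 1 0 + Ez 3 6 - Ez 4 5 + Ez 5 4 - Ez 6 3,
    -(2 : ℤ) • Ez 0 2 + (2 : ℤ) • Ez 2 0 - Ez 3 5 - Ez 4 6 + Ez 5 3 + Ez 6 4,
    -(2 : ℤ) • Ez 0 3 - Ez 1 6 + Ez 2 5 + (2 : ℤ) • Ez 3 0 - Ez 5 2 + Ez 6 1,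
    -(2 : ℤ) • Ez 0 4 + Ez 1 5 + Ez 2 6 + (2 : ℤ) • Ez 4 0 - Ez 5 1 - Ez 6 2,
    -(2 : ℤ) • Ez 0 5 - Ez 1 4 - Ez 2 3 + Ez 3 2 + Ez 4 1 + (2 : ℤ) • Ez 5 0,
    -(2 : ℤ) • Ez 0 6 + Ez 1 3 - Ez 2 4 - Ez 3 1 + Ez 4 2 + (2 : ℤ) • Ez 6 0]
def g2q : Fin 14 → Fin 14 → Fin 14 → ℤ :=
 ![![![0, 0, 0, 0, 0, 0, 0, 0, 0, 0, 0, 0, 0, 0],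
   ![0, 0, 2, 0, 0, 0, 0, 0, 0, 0, 0, 0, 0, 0],
   ![0, -2, 0, 0, 0, 0, 0, 0, 0, 0, 0, 0, 0, 0],
   ![0, 0, 0, 0, 0, 0, 1, 0, 0, 0, 0, 0, 0, 0],
   ![0, 0, 0, 0, 0, 1, 0, 0, 0, 0, 0, 0, 0, 0],
   ![0, 0, 0, 0, -1, 0, 0, 0, 0, 0, 0, 0, 0, 0],
   ![0, 0, 0, -1, 0, 0, 0, 0, 0, 0, 0, 0, 0, 0],
   ![0, 0, 0, 0, 0, 0, 0, 0, 0, 0, 0, 0, 0, 0],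
   ![0, 0, 0, 0, 0, 0, 0, 0, 0, 0, 0, 0, 0, 0],
   ![0, 0, 0, 0, 0, 0, 0, 0, 0, 0, 0, 0, 0, 0],
   ![0, 0, 0, 0, 0, 0, 0, 0, 0, 0, 0, 0, 0, 1],
   ![0, 0, 0, 0, 0, 0, 0, 0, 0, 0, 0, 0, 1, 0],
   ![0, 0, 0, 0, 0, 0, 0, 0, 0, 0, 0, -1, 0, 0],
   ![0, 0, 0, 0, 0, 0, 0, 0, 0, 0, -1, 0, 0, 0]],
  ![![0, 0, -2, 0, 0, 0, 0, 0, 0, 0, 0, 0, 0, 0],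
   ![0, 0, 0, 0, 0, 0, 0, 0, 0, 0, 0, 0, 0, 0],
   ![2, 0, 0, 0, 0, 0, 0, 0, 0, 0, 0, 0, 0, 0],
   ![0, 0, 0, 0, 0, -1, 0, 0, 0, 0, 0, 0, 0, 0],
   ![0, 0, 0, 0, 0, 0, 1, 0, 0, 0, 0, 0, 0, 0],
   ![0, 0, 0, 1, 0, 0, 0, 0, 0, 0, 0, 0, 0, 0],
   ![0, 0, 0, 0, -1, 0, 0, 0, 0, 0, 0, 0, 0, 0],
   ![0, 0, 0, 0, 0, 0, 0, 0, 0, 0, 0, 0, 0, 0],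
   ![0, 0, 0, 0, 0, 0, 0, 0, 0, 0, 0, 0, 0, 0],
   ![0, 0, 0, 0, 0, 0, 0, 0, 0, 0, 0, 0, 0, 0],
   ![0, 0, 0, 0, 0, 0, 0, 0, 0, 0, 0, 0, -1, 0],
   ![0, 0, 0, 0, 0, 0, 0, 0, 0, 0, 0, 0, 0, 1],
   ![0, 0, 0, 0, 0, 0, 0, 0, 0, 0, 1, 0, 0, 0],
   ![0, 0, 0, 0, 0, 0, 0, 0, 0, 0, 0, -1, 0, 0]],
  ![![0, 2, 0, 0, 0, 0, 0, 0, 0, 0, 0, 0, 0, 0],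
   ![-2, 0, 0, 0, 0, 0, 0, 0, 0, 0, 0, 0, 0, 0],
   ![0, 0, 0, 0, 0, 0, 0, 0, 0, 0, 0, 0, 0, 0],
   ![0, 0, 0, 0, 1, 0, 0, 0, 0, 0, 0, 0, 0, 0],
   ![0, 0, 0, -1, 0, 0, 0, 0, 0, 0, 0, 0, 0, 0],
   ![0, 0, 0, 0, 0, 0, 1, 0, 0, 0, 0, 0, 0, 0],
   ![0, 0, 0, 0, 0, -1, 0, 0, 0, 0, 0, 0, 0, 0],
   ![0, 0, 0, 0, 0, 0, 0, 0, 0, 0, 0, 0, 0, 0],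
   ![0, 0, 0, 0, 0, 0, 0, 0, 0, 0, 0, 0, 0, 0],
   ![0, 0, 0, 0, 0, 0, 0, 0, 0, 0, 0, 0, 0, 0],
   ![0, 0, 0, 0, 0, 0, 0, 0, 0, 0, 0, 1, 0, 0],
   ![0, 0, 0, 0, 0, 0, 0, 0, 0, 0, -1, 0, 0, 0],
   ![0, 0, 0, 0, 0, 0, 0, 0, 0, 0, 0, 0, 0, 1],
   ![0, 0, 0, 0, 0, 0, 0, 0, 0, 0, 0, 0, -1, 0]],
  ![![0, 0, 0, 0, 0, 0, -1, 0, 0, 0, 0, 0, 0, 0],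
   ![0, 0, 0, 0, 0, 1, 0, 0, 0, 0, 0, 0, 0, 0],
   ![0, 0, 0, 0, -1, 0, 0, 0, 0, 0, 0, 0, 0, 0],
   ![0, 0, 0, 0, 0, 0, 0, 0, 0, 0, 0, 0, 0, 0],
   ![0, 0, 1, 0, 0, 0, 0, 1, 0, 0, 0, 0, 0, 0],
   ![0, -1, 0, 0, 0, 0, 0, 0, 0, 0, 0, 0, 0, 0],
   ![1, 0, 0, 0, 0, 0, 0, 0, 0, 0, 0, 0, 0, 0],
   ![0, 0, 0, 0, -3, 0, 0, 0, 0, 0, 0, 0, 0, 0],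
   ![0, 0, 0, 0, 0, 0, 0, 0, 0, 0, 0, 0, 0, -1],
   ![0, 0, 0, 0, 0, 0, 0, 0, 0, 0, 0, 0, -1, 0],
   ![0, 0, 0, 0, 0, 0, 0, 0, 0, 0, 0, 0, 0, 0],
   ![0, 0, 0, 0, 0, 0, 0, 0, 0, 0, 0, 0, 0, 0],
   ![0, 0, 0, 0, 0, 0, 0, 0, 0, 1, 0, 0, 0, 0],
   ![0, 0, 0, 0, 0, 0, 0, 0, 1, 0, 0, 0, 0, 0]],
  ![![0, 0, 0, 0, 0, -1, 0, 0, 0, 0, 0, 0, 0, 0],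
   ![0, 0, 0, 0, 0, 0, -1, 0, 0, 0, 0, 0, 0, 0],
   ![0, 0, 0, 1, 0, 0, 0, 0, 0, 0, 0, 0, 0, 0],
   ![0, 0, -1, 0, 0, 0, 0, -1, 0, 0, 0, 0, 0, 0],
   ![0, 0, 0, 0, 0, 0, 0, 0, 0, 0, 0, 0, 0, 0],
   ![1, 0, 0, 0, 0, 0, 0, 0, 0, 0, 0, 0, 0, 0],
   ![0, 1, 0, 0, 0, 0, 0, 0, 0, 0, 0, 0, 0, 0],
   ![0, 0, 0, 3, 0, 0, 0, 0, 0, 0, 0, 0, 0, 0],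
   ![0, 0, 0, 0, 0, 0, 0, 0, 0, 0, 0, 0, 1, 0],
   ![0, 0, 0, 0, 0, 0, 0, 0, 0, 0, 0, 0, 0, -1],
   ![0, 0, 0, 0, 0, 0, 0, 0, 0, 0, 0, 0, 0, 0],
   ![0, 0, 0, 0, 0, 0, 0, 0, 0, 0, 0, 0, 0, 0],
   ![0, 0, 0, 0, 0, 0, 0, 0, -1, 0, 0, 0, 0, 0],
   ![0, 0, 0, 0, 0, 0, 0, 0, 0, 1, 0, 0, 0, 0]],
  ![![0, 0, 0, 0, 1, 0, 0, 0, 0, 0, 0, 0, 0, 0],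
   ![0, 0, 0, -1, 0, 0, 0, 0, 0, 0, 0, 0, 0, 0],
   ![0, 0, 0, 0, 0, 0, -1, 0, 0, 0, 0, 0, 0, 0],
   ![0, 1, 0, 0, 0, 0, 0, 0, 0, 0, 0, 0, 0, 0],
   ![-1, 0, 0, 0, 0, 0, 0, 0, 0, 0, 0, 0, 0, 0],
   ![0, 0, 0, 0, 0, 0, 0, 0, 0, 0, 0, 0, 0, 0],
   ![0, 0, 1, 0, 0, 0, 0, -1, 0, 0, 0, 0, 0, 0],
   ![0, 0, 0, 0, 0, 0, 3, 0, 0, 0, 0, 0, 0, 0],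
   ![0, 0, 0, 0, 0, 0, 0, 0, 0, 0, 0, -1, 0, 0],
   ![0, 0, 0, 0, 0, 0, 0, 0, 0, 0, 1, 0, 0, 0],
   ![0, 0, 0, 0, 0, 0, 0, 0, 0, -1, 0, 0, 0, 0],
   ![0, 0, 0, 0, 0, 0, 0, 0, 1, 0, 0, 0, 0, 0],
   ![0, 0, 0, 0, 0, 0, 0, 0, 0, 0, 0, 0, 0, 0],
   ![0, 0, 0, 0, 0, 0, 0, 0, 0, 0, 0, 0, 0, 0]],
  ![![0, 0, 0, 1, 0, 0, 0, 0, 0, 0, 0, 0, 0, 0],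
   ![0, 0, 0, 0, 1, 0, 0, 0, 0, 0, 0, 0, 0, 0],
   ![0, 0, 0, 0, 0, 1, 0, 0, 0, 0, 0, 0, 0, 0],
   ![-1, 0, 0, 0, 0, 0, 0, 0, 0, 0, 0, 0, 0, 0],
   ![0, -1, 0, 0, 0, 0, 0, 0, 0, 0, 0, 0, 0, 0],
   ![0, 0, -1, 0, 0, 0, 0, 1, 0, 0, 0, 0, 0, 0],
   ![0, 0, 0, 0, 0, 0, 0, 0, 0, 0, 0, 0, 0, 0],
   ![0, 0, 0, 0, 0, -3, 0, 0, 0, 0, 0, 0, 0, 0],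
   ![0, 0, 0, 0, 0, 0, 0, 0, 0, 0, 1, 0, 0, 0],
   ![0, 0, 0, 0, 0, 0, 0, 0, 0, 0, 0, 1, 0, 0],
   ![0, 0, 0, 0, 0, 0, 0, 0, -1, 0, 0, 0, 0, 0],
   ![0, 0, 0, 0, 0, 0, 0, 0, 0, -1, 0, 0, 0, 0],
   ![0, 0, 0, 0, 0, 0, 0, 0, 0, 0, 0, 0, 0, 0],
   ![0, 0, 0, 0, 0, 0, 0, 0, 0, 0, 0, 0, 0, 0]],
  ![![0, 0, 0, 0, 0, 0, 0, 0, 0, 0, 0, 0, 0, 0],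
   ![0, 0, 0, 0, 0, 0, 0, 0, 0, 0, 0, 0, 0, 0],
   ![0, 0, 0, 0, 0, 0, 0, 0, 0, 0, 0, 0, 0, 0],
   ![0, 0, 0, 0, 3, 0, 0, 0, 0, 0, 0, 0, 0, 0],
   ![0, 0, 0, -3, 0, 0, 0, 0, 0, 0, 0, 0, 0, 0],
   ![0, 0, 0, 0, 0, 0, -3, 0, 0, 0, 0, 0, 0, 0],
   ![0, 0, 0, 0, 0, 3, 0, 0, 0, 0, 0, 0, 0, 0],
   ![0, 0, 0, 0, 0, 0, 0, 0, 0, 0, 0, 0, 0, 0],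
   ![0, 0, 0, 0, 0, 0, 0, 0, 0, 2, 0, 0, 0, 0],
   ![0, 0, 0, 0, 0, 0, 0, 0, -2, 0, 0, 0, 0, 0],
   ![0, 0, 0, 0, 0, 0, 0, 0, 0, 0, 0, -1, 0, 0],
   ![0, 0, 0, 0, 0, 0, 0, 0, 0, 0, 1, 0, 0, 0],
   ![0, 0, 0, 0, 0, 0, 0, 0, 0, 0, 0, 0, 0, 1],
   ![0, 0, 0, 0, 0, 0, 0, 0, 0, 0, 0, 0, -1, 0]],
  ![![0, 0, 0, 0, 0, 0, 0, 0, 0, 0, 0, 0, 0, 0],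
   ![0, 0, 0, 0, 0, 0, 0, 0, 0, 0, 0, 0, 0, 0],
   ![0, 0, 0, 0, 0, 0, 0, 0, 0, 0, 0, 0, 0, 0],
   ![0, 0, 0, 0, 0, 0, 0, 0, 0, 0, 0, 0, 0, 1],
   ![0, 0, 0, 0, 0, 0, 0, 0, 0, 0, 0, 0, -1, 0],
   ![0, 0, 0, 0, 0, 0, 0, 0, 0, 0, 0, 1, 0, 0],
   ![0, 0, 0, 0, 0, 0, 0, 0, 0, 0, -1, 0, 0, 0],
   ![0, 0, 0, 0, 0, 0, 0, 0, 0, -2, 0, 0, 0, 0],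
   ![0, 0, 0, 0, 0, 0, 0, 0, 0, 0, 0, 0, 0, 0],
   ![0, 0, 0, 0, 0, 0, 0, 2, 0, 0, 0, 0, 0, 0],
   ![0, 0, 0, 0, 0, 0, 3, 0, 0, 0, 0, 0, 0, -2],
   ![0, 0, 0, 0, 0, -3, 0, 0, 0, 0, 0, 0, 2, 0],
   ![0, 0, 0, 0, 3, 0, 0, 0, 0, 0, 0, -2, 0, 0],
   ![0, 0, 0, -3, 0, 0, 0, 0, 0, 0, 2, 0, 0, 0]],
  ![![0, 0, 0, 0, 0, 0, 0, 0, 0, 0, 0, 0, 0, 0],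
   ![0, 0, 0, 0, 0, 0, 0, 0, 0, 0, 0, 0, 0, 0],
   ![0, 0, 0, 0, 0, 0, 0, 0, 0, 0, 0, 0, 0, 0],
   ![0, 0, 0, 0, 0, 0, 0, 0, 0, 0, 0, 0, 1, 0],
   ![0, 0, 0, 0, 0, 0, 0, 0, 0, 0, 0, 0, 0, 1],
   ![0, 0, 0, 0, 0, 0, 0, 0, 0, 0, -1, 0, 0, 0],
   ![0, 0, 0, 0, 0, 0, 0, 0, 0, 0, 0, -1, 0, 0],
   ![0, 0, 0, 0, 0, 0, 0, 0, 2, 0, 0, 0, 0, 0],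
   ![0, 0, 0, 0, 0, 0, 0, -2, 0, 0, 0, 0, 0, 0],
   ![0, 0, 0, 0, 0, 0, 0, 0, 0, 0, 0, 0, 0, 0],
   ![0, 0, 0, 0, 0, 3, 0, 0, 0, 0, 0, 0, 2, 0],
   ![0, 0, 0, 0, 0, 0, 3, 0, 0, 0, 0, 0, 0, 2],
   ![0, 0, 0, -3, 0, 0, 0, 0, 0, 0, -2, 0, 0, 0],
   ![0, 0, 0, 0, -3, 0, 0, 0, 0, 0, 0, -2, 0, 0]],
  ![![0, 0, 0, 0, 0, 0, 0, 0, 0, 0, 0, 0, 0, -1],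
   ![0, 0, 0, 0, 0, 0, 0, 0, 0, 0, 0, 0, 1, 0],
   ![0, 0, 0, 0, 0, 0, 0, 0, 0, 0, 0, -1, 0, 0],
   ![0, 0, 0, 0, 0, 0, 0, 0, 0, 0, 0, 0, 0, 0],
   ![0, 0, 0, 0, 0, 0, 0, 0, 0, 0, 0, 0, 0, 0],
   ![0, 0, 0, 0, 0, 0, 0, 0, 0, 1, 0, 0, 0, 0],
   ![0, 0, 0, 0, 0, 0, 0, 0, 1, 0, 0, 0, 0, 0],
   ![0, 0, 0, 0, 0, 0, 0, 0, 0, 0, 0, 1, 0, 0],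
   ![0, 0, 0, 0, 0, 0, -3, 0, 0, 0, 0, 0, 0, 2],
   ![0, 0, 0, 0, 0, -3, 0, 0, 0, 0, 0, 0, -2, 0],
   ![0, 0, 0, 0, 0, 0, 0, 0, 0, 0, 0, 0, 0, 0],
   ![0, 0, 3, 0, 0, 0, 0, -1, 0, 0, 0, 0, 0, 0],
   ![0, -3, 0, 0, 0, 0, 0, 0, 0, 2, 0, 0, 0, 0],
   ![3, 0, 0, 0, 0, 0, 0, 0, -2, 0, 0, 0, 0, 0]],
  ![![0, 0, 0, 0, 0, 0, 0, 0, 0, 0, 0, 0, -1, 0],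
   ![0, 0, 0, 0, 0, 0, 0, 0, 0, 0, 0, 0, 0, -1],
   ![0, 0, 0, 0, 0, 0, 0, 0, 0, 0, 1, 0, 0, 0],
   ![0, 0, 0, 0, 0, 0, 0, 0, 0, 0, 0, 0, 0, 0],
   ![0, 0, 0, 0, 0, 0, 0, 0, 0, 0, 0, 0, 0, 0],
   ![0, 0, 0, 0, 0, 0, 0, 0, -1, 0, 0, 0, 0, 0],
   ![0, 0, 0, 0, 0, 0, 0, 0, 0, 1, 0, 0, 0, 0],
   ![0, 0, 0, 0, 0, 0, 0, 0, 0, 0, -1, 0, 0, 0],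
   ![0, 0, 0, 0, 0, 3, 0, 0, 0, 0, 0, 0, -2, 0],
   ![0, 0, 0, 0, 0, 0, -3, 0, 0, 0, 0, 0, 0, -2],
   ![0, 0, -3, 0, 0, 0, 0, 1, 0, 0, 0, 0, 0, 0],
   ![0, 0, 0, 0, 0, 0, 0, 0, 0, 0, 0, 0, 0, 0],
   ![3, 0, 0, 0, 0, 0, 0, 0, 2, 0, 0, 0, 0, 0],
   ![0, 3, 0, 0, 0, 0, 0, 0, 0, 2, 0, 0, 0, 0]],
  ![![0, 0, 0, 0, 0, 0, 0, 0, 0, 0, 0, 1, 0, 0],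
   ![0, 0, 0, 0, 0, 0, 0, 0, 0, 0, -1, 0, 0, 0],
   ![0, 0, 0, 0, 0, 0, 0, 0, 0, 0, 0, 0, 0, -1],
   ![0, 0, 0, 0, 0, 0, 0, 0, 0, -1, 0, 0, 0, 0],
   ![0, 0, 0, 0, 0, 0, 0, 0, 1, 0, 0, 0, 0, 0],
   ![0, 0, 0, 0, 0, 0, 0, 0, 0, 0, 0, 0, 0, 0],
   ![0, 0, 0, 0, 0, 0, 0, 0, 0, 0, 0, 0, 0, 0],
   ![0, 0, 0, 0, 0, 0, 0, 0, 0, 0, 0, 0, 0, -1],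
   ![0, 0, 0, 0, -3, 0, 0, 0, 0, 0, 0, 2, 0, 0],
   ![0, 0, 0, 3, 0, 0, 0, 0, 0, 0, 2, 0, 0, 0],
   ![0, 3, 0, 0, 0, 0, 0, 0, 0, -2, 0, 0, 0, 0],
   ![-3, 0, 0, 0, 0, 0, 0, 0, -2, 0, 0, 0, 0, 0],
   ![0, 0, 0, 0, 0, 0, 0, 0, 0, 0, 0, 0, 0, 0],
   ![0, 0, 3, 0, 0, 0, 0, 1, 0, 0, 0, 0, 0, 0]],
  ![![0, 0, 0, 0, 0, 0, 0, 0, 0, 0, 1, 0, 0, 0],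
   ![0, 0, 0, 0, 0, 0, 0, 0, 0, 0, 0, 1, 0, 0],
   ![0, 0, 0, 0, 0, 0, 0, 0, 0, 0, 0, 0, 1, 0],
   ![0, 0, 0, 0, 0, 0, 0, 0, -1, 0, 0, 0, 0, 0],
   ![0, 0, 0, 0, 0, 0, 0, 0, 0, -1, 0, 0, 0, 0],
   ![0, 0, 0, 0, 0, 0, 0, 0, 0, 0, 0, 0, 0, 0],
   ![0, 0, 0, 0, 0, 0, 0, 0, 0, 0, 0, 0, 0, 0],
   ![0, 0, 0, 0, 0, 0, 0, 0, 0, 0, 0, 0, 1, 0],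
   ![0, 0, 0, 3, 0, 0, 0, 0, 0, 0, -2, 0, 0, 0],
   ![0, 0, 0, 0, 3, 0, 0, 0, 0, 0, 0, 2, 0, 0],
   ![-3, 0, 0, 0, 0, 0, 0, 0, 2, 0, 0, 0, 0, 0],
   ![0, -3, 0, 0, 0, 0, 0, 0, 0, -2, 0, 0, 0, 0],
   ![0, 0, -3, 0, 0, 0, 0, -1, 0, 0, 0, 0, 0, 0],
   ![0, 0, 0, 0, 0, 0, 0, 0, 0, 0, 0, 0, 0, 0]]]

def g2e : Fin 14 → ℕ := ![0,0,0,0,0,0,0,1,1,1,1,1,1,1]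

def sz7 (f : Fin 7 → ℤ) : ℤ := f 0 + f 1 + f 2 + f 3 + f 4 + f 5 + f 6
def sz14 (f : Fin 14 → ℤ) : ℤ :=
  f 0 + f 1 + f 2 + f 3 + f 4 + f 5 + f 6 + f 7 + f 8 + f 9 + f 10 + f 11 + f 12 + f 13

set_option maxRecDepth 100000 in
set_option maxHeartbeats 1000000 in
theorem g2_key1 : ∀ i j : Fin 14, ∀ a b : Fin 7,
    sz7 (fun k => Dz i a k * Dz j k b) - sz7 (fun k => Dz j a k * Dz i k b)
      = sz14 (fun k => g2q i j k * Dz k a b) := by decide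

set_option maxRecDepth 100000 in
set_option maxHeartbeats 1000000 in
theorem g2_key2 : ∀ i j : Fin 14,
    sz14 (fun k => sz14 (fun l => g2q i l k * g2q j k l))
      = if i = j then -16 * 3 ^ (g2e i) else 0 := by decide

lemma sum_univ_fourteen {M : Type*} [AddCommMonoid M] (f : Fin 14 → M) :
    ∑ i, f i = f 0 + f 1 + f 2 + f 3 + f 4 + f 5 + f 6 + f 7 + f 8 + f 9 + f 10 + f 11
      + f 12 + f 13 := by
  rw [Fin.sum_univ_castSucc (n := 13), Fin.sum_univ_castSucc (n := 12),
    Fin.sum_univ_castSucc (n := 11), Fin.sum_univ_castSucc (n := 10),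
    Fin.sum_univ_castSucc (n := 9), Fin.sum_univ_castSucc (n := 8),
    Fin.sum_univ_castSucc (n := 7), Fin.sum_univ_seven]
  rfl

/-- The integer matrices bracket correctly (matrix-level version of `g2_key1`). -/
lemma Dz_bracket (i j : Fin 14) :
    Dz i * Dz j - Dz j * Dz i = ∑ k, g2q i j k • Dz k := by
  ext a b
  have h := g2_key1 i j a b
  simp only [sz7, sz14] at h
  simp only [Matrix.sub_apply, Matrix.mul_apply, Matrix.sum_apply, Matrix.smul_apply,
    smul_eq_mul, Fin.sum_univ_seven, sum_univ_fourteen]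
  exact h

/-- Real versions of the integer matrices. -/
noncomputable def DzR (i : Fin 14) : Matrix (Fin 7) (Fin 7) ℝ :=
  (Dz i).map (Int.cast : ℤ → ℝ)

lemma DzR_bracket (i j : Fin 14) :
    DzR i * DzR j - DzR j * DzR i = ∑ k, (g2q i j k : ℝ) • DzR k := by
  ext a b
  have h0 := congrFun (congrFun (Dz_bracket i j) a) b
  simp only [Matrix.sub_apply, Matrix.mul_apply, Matrix.sum_apply, Matrix.smul_apply,
    smul_eq_mul] at h0
  have h := congrArg (Int.cast : ℤ → ℝ) h0
  push_cast at h
  simpa [DzR, Matrix.map_apply, Matrix.sub_apply, Matrix.mul_apply, Matrix.sum_apply,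
    Matrix.smul_apply] using h

/- entry-unfolding lemmas -/
lemma g2C_e0 : g2C 0 = -E7 3 6 - E7 4 5 + E7 5 4 + E7 6 3 := rfl
lemma g2C_e1 : g2C 1 = E7 3 5 - E7 4 6 - E7 5 3 + E7 6 4 := rfl
lemma g2C_e2 : g2C 2 = -E7 3 4 + E7 4 3 - E7 5 6 + E7 6 5 := rfl
lemma g2C_e3 : g2C 3 = E7 1 6 + E7 2 5 - E7 5 2 - E7 6 1 := rfl
lemma g2C_e4 : g2C 4 = -E7 1 5 + E7 2 6 + E7 5 1 - E7 6 2 := rfl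
lemma g2C_e5 : g2C 5 = E7 1 4 - E7 2 3 + E7 3 2 - E7 4 1 := rfl
lemma g2C_e6 : g2C 6 = -E7 1 3 - E7 2 4 + E7 3 1 + E7 4 2 := rfl
lemma g2C_e7 : g2C 7 = (1 / Real.sqrt 3) • (-(2 : ℝ) • E7 1 2 + (2 : ℝ) • E7 2 1 + E7 3 4 - E7 4 3 - E7 5 6 + E7 6 5) := rfl
lemma g2C_e8 : g2C 8 = (1 / Real.sqrt 3) • (-(2 : ℝ) • E7 0 1 + (2 : ℝ) • E7 1 0 + E7 3 6 - E7 4 5 + E7 5 4 - E7 6 3) := rfl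
lemma g2C_e9 : g2C 9 = (1 / Real.sqrt 3) • (-(2 : ℝ) • E7 0 2 + (2 : ℝ) • E7 2 0 - E7 3 5 - E7 4 6 + E7 5 3 + E7 6 4) := rfl
lemma g2C_e10 : g2C 10 = (1 / Real.sqrt 3) • (-(2 : ℝ) • E7 0 3 - E7 1 6 + E7 2 5 + (2 : ℝ) • E7 3 0 - E7 5 2 + E7 6 1) := rfl
lemma g2C_e11 : g2C 11 = (1 / Real.sqrt 3) • (-(2 : ℝ) • E7 0 4 + E7 1 5 + E7 2 6 + (2 : ℝ) • E7 4 0 - E7 5 1 - E7 6 2) := rfl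
lemma g2C_e12 : g2C 12 = (1 / Real.sqrt 3) • (-(2 : ℝ) • E7 0 5 - E7 1 4 - E7 2 3 + E7 3 2 + E7 4 1 + (2 : ℝ) • E7 5 0) := rfl
lemma g2C_e13 : g2C 13 = (1 / Real.sqrt 3) • (-(2 : ℝ) • E7 0 6 + E7 1 3 - E7 2 4 - E7 3 1 + E7 4 2 + (2 : ℝ) • E7 6 0) := rfl

lemma Dz_e0 : Dz 0 = -Ez 3 6 - Ez 4 5 + Ez 5 4 + Ez 6 3 := rfl
lemma Dz_e1 : Dz 1 = Ez 3 5 - Ez 4 6 - Ez 5 3 + Ez 6 4 := rfl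
lemma Dz_e2 : Dz 2 = -Ez 3 4 + Ez 4 3 - Ez 5 6 + Ez 6 5 := rfl
lemma Dz_e3 : Dz 3 = Ez 1 6 + Ez 2 5 - Ez 5 2 - Ez 6 1 := rfl
lemma Dz_e4 : Dz 4 = -Ez 1 5 + Ez 2 6 + Ez 5 1 - Ez 6 2 := rfl
lemma Dz_e5 : Dz 5 = Ez 1 4 - Ez 2 3 + Ez 3 2 - Ez 4 1 := rfl
lemma Dz_e6 : Dz 6 = -Ez 1 3 - Ez 2 4 + Ez 3 1 + Ez 4 2 := rfl
lemma Dz_e7 : Dz 7 = -(2 : ℤ) • Ez 1 2 + (2 : ℤ) • Ez 2 1 + Ez 3 4 - Ez 4 3 - Ez 5 6 + Ez 6 5 := rfl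
lemma Dz_e8 : Dz 8 = -(2 : ℤ) • Ez 0 1 + (2 : ℤ) • Ez 1 0 + Ez 3 6 - Ez 4 5 + Ez 5 4 - Ez 6 3 := rfl
lemma Dz_e9 : Dz 9 = -(2 : ℤ) • Ez 0 2 + (2 : ℤ) • Ez 2 0 - Ez 3 5 - Ez 4 6 + Ez 5 3 + Ez 6 4 := rfl
lemma Dz_e10 : Dz 10 = -(2 : ℤ) • Ez 0 3 - Ez 1 6 + Ez 2 5 + (2 : ℤ) • Ez 3 0 - Ez 5 2 + Ez 6 1 := rfl
lemma Dz_e11 : Dz 11 = -(2 : ℤ) • Ez 0 4 + Ez 1 5 + Ez 2 6 + (2 : ℤ) • Ez 4 0 - Ez 5 1 - Ez 6 2 := rfl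
lemma Dz_e12 : Dz 12 = -(2 : ℤ) • Ez 0 5 - Ez 1 4 - Ez 2 3 + Ez 3 2 + Ez 4 1 + (2 : ℤ) • Ez 5 0 := rfl
lemma Dz_e13 : Dz 13 = -(2 : ℤ) • Ez 0 6 + Ez 1 3 - Ez 2 4 - Ez 3 1 + Ez 4 2 + (2 : ℤ) • Ez 6 0 := rfl

lemma sqrt3_ne : Real.sqrt 3 ≠ 0 := by positivity
lemma sqrt3_sq : Real.sqrt 3 ^ (2:ℤ) = 3 := by
  rw [show (2:ℤ) = ((2:ℕ):ℤ) from rfl, zpow_natCast]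
  exact Real.sq_sqrt (by norm_num)

/- map structural lemmas -/
lemma mapc_add (A B : Matrix (Fin 7) (Fin 7) ℤ) :
    (A + B).map (Int.cast : ℤ → ℝ) = A.map Int.cast + B.map Int.cast := by
  ext a b; simp [Matrix.map_apply]
lemma mapc_sub (A B : Matrix (Fin 7) (Fin 7) ℤ) :
    (A - B).map (Int.cast : ℤ → ℝ) = A.map Int.cast - B.map Int.cast := by
  ext a b; simp [Matrix.map_apply]
lemma mapc_neg (A : Matrix (Fin 7) (Fin 7) ℤ) :
    (-A).map (Int.cast : ℤ → ℝ) = -(A.map Int.cast) := by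
  ext a b; simp [Matrix.map_apply]
lemma mapc_two_smul (A : Matrix (Fin 7) (Fin 7) ℤ) :
    ((2:ℤ) • A).map (Int.cast : ℤ → ℝ) = (2:ℝ) • A.map Int.cast := by
  ext a b
  simp only [Matrix.map_apply, Matrix.smul_apply, smul_eq_mul]
  push_cast
  ring
lemma mapc_neg_two_smul (A : Matrix (Fin 7) (Fin 7) ℤ) :
    ((-2:ℤ) • A).map (Int.cast : ℤ → ℝ) = (-2:ℝ) • A.map Int.cast := by
  ext a b
  simp only [Matrix.map_apply, Matrix.smul_apply, smul_eq_mul]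
  push_cast
  ring

lemma mapc_E (i j : Fin 7) : (Ez i j).map (Int.cast : ℤ → ℝ) = E7 i j := by
  ext a b
  simp [Ez, E7, Matrix.single, Matrix.map_apply, Matrix.of_apply, apply_ite (Int.cast : ℤ → ℝ)]

lemma hmapDz_0 : DzR 0 = Real.sqrt 3 ^ ((g2e 0 : ℕ) : ℤ) • g2C 0 := by
  rw [show ((g2e 0 : ℕ) : ℤ) = 0 from rfl, zpow_zero, one_smul]
  simp only [DzR, Dz_e0, g2C_e0, mapc_add, mapc_sub, mapc_neg, mapc_two_smul, mapc_neg_two_smul, mapc_E]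

lemma hmapDz_1 : DzR 1 = Real.sqrt 3 ^ ((g2e 1 : ℕ) : ℤ) • g2C 1 := by
  rw [show ((g2e 1 : ℕ) : ℤ) = 0 from rfl, zpow_zero, one_smul]
  simp only [DzR, Dz_e1, g2C_e1, mapc_add, mapc_sub, mapc_neg, mapc_two_smul, mapc_neg_two_smul, mapc_E]

lemma hmapDz_2 : DzR 2 = Real.sqrt 3 ^ ((g2e 2 : ℕ) : ℤ) • g2C 2 := by
  rw [show ((g2e 2 : ℕ) : ℤ) = 0 from rfl, zpow_zero, one_smul]
  simp only [DzR, Dz_e2, g2C_e2, mapc_add, mapc_sub, mapc_neg, mapc_two_smul, mapc_neg_two_smul, mapc_E]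

lemma hmapDz_3 : DzR 3 = Real.sqrt 3 ^ ((g2e 3 : ℕ) : ℤ) • g2C 3 := by
  rw [show ((g2e 3 : ℕ) : ℤ) = 0 from rfl, zpow_zero, one_smul]
  simp only [DzR, Dz_e3, g2C_e3, mapc_add, mapc_sub, mapc_neg, mapc_two_smul, mapc_neg_two_smul, mapc_E]

lemma hmapDz_4 : DzR 4 = Real.sqrt 3 ^ ((g2e 4 : ℕ) : ℤ) • g2C 4 := by
  rw [show ((g2e 4 : ℕ) : ℤ) = 0 from rfl, zpow_zero, one_smul]
  simp only [DzR, Dz_e4, g2C_e4, mapc_add, mapc_sub, mapc_neg, mapc_two_smul, mapc_neg_two_smul, mapc_E]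

lemma hmapDz_5 : DzR 5 = Real.sqrt 3 ^ ((g2e 5 : ℕ) : ℤ) • g2C 5 := by
  rw [show ((g2e 5 : ℕ) : ℤ) = 0 from rfl, zpow_zero, one_smul]
  simp only [DzR, Dz_e5, g2C_e5, mapc_add, mapc_sub, mapc_neg, mapc_two_smul, mapc_neg_two_smul, mapc_E]

lemma hmapDz_6 : DzR 6 = Real.sqrt 3 ^ ((g2e 6 : ℕ) : ℤ) • g2C 6 := by
  rw [show ((g2e 6 : ℕ) : ℤ) = 0 from rfl, zpow_zero, one_smul]
  simp only [DzR, Dz_e6, g2C_e6, mapc_add, mapc_sub, mapc_neg, mapc_two_smul, mapc_neg_two_smul, mapc_E]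

lemma hmapDz_7 : DzR 7 = Real.sqrt 3 ^ ((g2e 7 : ℕ) : ℤ) • g2C 7 := by
  rw [show ((g2e 7 : ℕ) : ℤ) = 1 from rfl, zpow_one, g2C_e7, smul_smul, mul_one_div,
    div_self sqrt3_ne, one_smul]
  simp only [DzR, Dz_e7, mapc_add, mapc_sub, mapc_neg, mapc_two_smul, mapc_neg_two_smul, mapc_E]

lemma hmapDz_8 : DzR 8 = Real.sqrt 3 ^ ((g2e 8 : ℕ) : ℤ) • g2C 8 := by
  rw [show ((g2e 8 : ℕ) : ℤ) = 1 from rfl, zpow_one, g2C_e8, smul_smul, mul_one_div,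
    div_self sqrt3_ne, one_smul]
  simp only [DzR, Dz_e8, mapc_add, mapc_sub, mapc_neg, mapc_two_smul, mapc_neg_two_smul, mapc_E]

lemma hmapDz_9 : DzR 9 = Real.sqrt 3 ^ ((g2e 9 : ℕ) : ℤ) • g2C 9 := by
  rw [show ((g2e 9 : ℕ) : ℤ) = 1 from rfl, zpow_one, g2C_e9, smul_smul, mul_one_div,
    div_self sqrt3_ne, one_smul]
  simp only [DzR, Dz_e9, mapc_add, mapc_sub, mapc_neg, mapc_two_smul, mapc_neg_two_smul, mapc_E]

lemma hmapDz_10 : DzR 10 = Real.sqrt 3 ^ ((g2e 10 : ℕ) : ℤ) • g2C 10 := by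
  rw [show ((g2e 10 : ℕ) : ℤ) = 1 from rfl, zpow_one, g2C_e10, smul_smul, mul_one_div,
    div_self sqrt3_ne, one_smul]
  simp only [DzR, Dz_e10, mapc_add, mapc_sub, mapc_neg, mapc_two_smul, mapc_neg_two_smul, mapc_E]

lemma hmapDz_11 : DzR 11 = Real.sqrt 3 ^ ((g2e 11 : ℕ) : ℤ) • g2C 11 := by
  rw [show ((g2e 11 : ℕ) : ℤ) = 1 from rfl, zpow_one, g2C_e11, smul_smul, mul_one_div,
    div_self sqrt3_ne, one_smul]
  simp only [DzR, Dz_e11, mapc_add, mapc_sub, mapc_neg, mapc_two_smul, mapc_neg_two_smul, mapc_E]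

lemma hmapDz_12 : DzR 12 = Real.sqrt 3 ^ ((g2e 12 : ℕ) : ℤ) • g2C 12 := by
  rw [show ((g2e 12 : ℕ) : ℤ) = 1 from rfl, zpow_one, g2C_e12, smul_smul, mul_one_div,
    div_self sqrt3_ne, one_smul]
  simp only [DzR, Dz_e12, mapc_add, mapc_sub, mapc_neg, mapc_two_smul, mapc_neg_two_smul, mapc_E]

lemma hmapDz_13 : DzR 13 = Real.sqrt 3 ^ ((g2e 13 : ℕ) : ℤ) • g2C 13 := by
  rw [show ((g2e 13 : ℕ) : ℤ) = 1 from rfl, zpow_one, g2C_e13, smul_smul, mul_one_div,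
    div_self sqrt3_ne, one_smul]
  simp only [DzR, Dz_e13, mapc_add, mapc_sub, mapc_neg, mapc_two_smul, mapc_neg_two_smul, mapc_E]

lemma hmapDz (i : Fin 14) : DzR i = Real.sqrt 3 ^ ((g2e i : ℤ)) • g2C i := by
  fin_cases i
  · exact hmapDz_0
  · exact hmapDz_1
  · exact hmapDz_2
  · exact hmapDz_3
  · exact hmapDz_4
  · exact hmapDz_5
  · exact hmapDz_6
  · exact hmapDz_7
  · exact hmapDz_8
  · exact hmapDz_9
  · exact hmapDz_10
  · exact hmapDz_11
  · exact hmapDz_12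
  · exact hmapDz_13

/-- The real structure constants. -/
noncomputable def g2r (i j k : Fin 14) : ℝ :=
  (g2q i j k : ℝ) * Real.sqrt 3 ^ ((g2e k : ℤ) - (g2e i : ℤ) - (g2e j : ℤ))

lemma g2C_unscale (i : Fin 14) :
    g2C i = Real.sqrt 3 ^ (-(g2e i : ℤ)) • DzR i := by
  rw [hmapDz i, smul_smul, ← zpow_add₀ sqrt3_ne, neg_add_cancel, zpow_zero, one_smul]

/-- Key bracket relation over `ℝ`. -/
lemma g2C_bracket (i j : Fin 14) :
    ⁅g2C i, g2C j⁆ = ∑ k, g2r i j k • g2C k := by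
  have hmul : ∀ (a c : ℝ) (X Y : Matrix (Fin 7) (Fin 7) ℝ),
      (a • X) * (c • Y) - (c • Y) * (a • X) = (a * c) • (X * Y - Y * X) := by
    intro a c X Y
    rw [smul_sub, smul_mul_assoc, mul_smul_comm, smul_smul, smul_mul_assoc, mul_smul_comm,
      smul_smul, mul_comm c a]
  rw [Ring.lie_def, g2C_unscale i, g2C_unscale j, hmul, DzR_bracket i j, Finset.smul_sum]
  refine Finset.sum_congr rfl fun k _ => ?_
  rw [hmapDz k, smul_smul, smul_smul]
  congr 1
  have hsc : ∀ (a c d : ℤ) (z : ℝ), Real.sqrt 3 ^ a * Real.sqrt 3 ^ c * z * Real.sqrt 3 ^ d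
      = z * Real.sqrt 3 ^ (a + c + d) := by
    intro a c d z
    rw [zpow_add₀ sqrt3_ne, zpow_add₀ sqrt3_ne]
    ring
  rw [hsc, show -(g2e i:ℤ) + -(g2e j:ℤ) + (g2e k:ℤ) = (g2e k:ℤ) - g2e i - g2e j from by ring]
  rfl

lemma g2q_sum_trace (i j : Fin 14) :
    (∑ k, ∑ l, g2q i l k * g2q j k l) = if i = j then -16 * 3 ^ (g2e i) else 0 := by
  have h := g2_key2 i j
  simp only [sz14] at h
  simpa only [sum_univ_fourteen] using h

lemma g2r_trace (i j : Fin 14) :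
    (∑ k, ∑ l, g2r i l k * g2r j k l) = if i = j then (-16 : ℝ) else 0 := by
  have hterm : ∀ k l : Fin 14, g2r i l k * g2r j k l =
      ((g2q i l k * g2q j k l : ℤ) : ℝ) * Real.sqrt 3 ^ (-(g2e i:ℤ) + -(g2e j:ℤ)) := by
    intro k l
    unfold g2r
    rw [mul_mul_mul_comm, ← zpow_add₀ sqrt3_ne,
      show ((g2e k:ℤ) - g2e i - g2e l) + ((g2e l:ℤ) - g2e j - g2e k) = -(g2e i:ℤ) + -(g2e j:ℤ)
        from by ring]
    push_cast
    ring
  simp_rw [hterm, ← Finset.sum_mul]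
  rw [show (∑ k, ∑ l, ((g2q i l k * g2q j k l : ℤ) : ℝ)) =
      ((∑ k, ∑ l, g2q i l k * g2q j k l : ℤ) : ℝ) from by push_cast; rfl]
  rw [g2q_sum_trace i j]
  by_cases hij : i = j
  · subst hij
    simp only [if_pos rfl, if_true]
    have he : g2e i = 0 ∨ g2e i = 1 :=
      (by decide : ∀ m : Fin 14, g2e m = 0 ∨ g2e m = 1) i
    rcases he with he | he <;> rw [he]
    · push_cast
      norm_num
    · rw [zpow_add₀ sqrt3_ne, _root_.zpow_neg]
      push_cast
      rw [zpow_one, ← mul_inv, Real.mul_self_sqrt (by norm_num : (0:ℝ) ≤ 3)]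
      norm_num
  · simp [hij]

/-- membership of brackets of generators in the span. -/
lemma g2C_bracket_mem (i j : Fin 14) :
    ⁅g2C i, g2C j⁆ ∈ Submodule.span ℝ (Set.range g2C) := by
  rw [g2C_bracket i j]
  exact Submodule.sum_mem _ fun k _ =>
    Submodule.smul_mem _ _ (Submodule.subset_span ⟨k, rfl⟩)

set_option maxHeartbeats 1600000 in
lemma g2C_linearIndependent : LinearIndependent ℝ g2C := by
  rw [Fintype.linearIndependent_iff]
  intro g hg
  have key : ∀ a b : Fin 7, (∑ i, g i * g2C i a b) = 0 := by
    intro a b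
    have h1 : (∑ i, g i • g2C i) a b = 0 := by rw [hg]; rfl
    rw [Matrix.sum_apply] at h1
    simpa [Matrix.smul_apply, smul_eq_mul] using h1
  have entry : ∀ a b : Fin 7, g 0 * g2C 0 a b + g 1 * g2C 1 a b + g 2 * g2C 2 a b
      + g 3 * g2C 3 a b + g 4 * g2C 4 a b + g 5 * g2C 5 a b + g 6 * g2C 6 a b
      + g 7 * g2C 7 a b + g 8 * g2C 8 a b + g 9 * g2C 9 a b + g 10 * g2C 10 a b
      + g 11 * g2C 11 a b + g 12 * g2C 12 a b + g 13 * g2C 13 a b = 0 := by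
    intro a b
    have := key a b
    rwa [sum_univ_fourteen] at this
  have hs := sqrt3_ne
  have h7 : g 7 = 0 := by
    have h := entry 1 2
    simp [g2C_e0, g2C_e1, g2C_e2, g2C_e3, g2C_e4, g2C_e5, g2C_e6, g2C_e7, g2C_e8, g2C_e9,
      g2C_e10, g2C_e11, g2C_e12, g2C_e13, E7, Matrix.single, Matrix.smul_apply,
      Matrix.add_apply, Matrix.sub_apply, Matrix.neg_apply, Matrix.of_apply, smul_eq_mul] at h
    first
      | exact h
      | exact h.symm
      | linarith
  have h8 : g 8 = 0 := by
    have h := entry 0 1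
    simp [g2C_e0, g2C_e1, g2C_e2, g2C_e3, g2C_e4, g2C_e5, g2C_e6, g2C_e7, g2C_e8, g2C_e9,
      g2C_e10, g2C_e11, g2C_e12, g2C_e13, E7, Matrix.single, Matrix.smul_apply,
      Matrix.add_apply, Matrix.sub_apply, Matrix.neg_apply, Matrix.of_apply, smul_eq_mul] at h
    first
      | exact h
      | exact h.symm
      | linarith
  have h9 : g 9 = 0 := by
    have h := entry 0 2
    simp [g2C_e0, g2C_e1, g2C_e2, g2C_e3, g2C_e4, g2C_e5, g2C_e6, g2C_e7, g2C_e8, g2C_e9,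
      g2C_e10, g2C_e11, g2C_e12, g2C_e13, E7, Matrix.single, Matrix.smul_apply,
      Matrix.add_apply, Matrix.sub_apply, Matrix.neg_apply, Matrix.of_apply, smul_eq_mul] at h
    first
      | exact h
      | exact h.symm
      | linarith
  have h10 : g 10 = 0 := by
    have h := entry 0 3
    simp [g2C_e0, g2C_e1, g2C_e2, g2C_e3, g2C_e4, g2C_e5, g2C_e6, g2C_e7, g2C_e8, g2C_e9,
      g2C_e10, g2C_e11, g2C_e12, g2C_e13, E7, Matrix.single, Matrix.smul_apply,
      Matrix.add_apply, Matrix.sub_apply, Matrix.neg_apply, Matrix.of_apply, smul_eq_mul] at h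
    first
      | exact h
      | exact h.symm
      | linarith
  have h11 : g 11 = 0 := by
    have h := entry 0 4
    simp [g2C_e0, g2C_e1, g2C_e2, g2C_e3, g2C_e4, g2C_e5, g2C_e6, g2C_e7, g2C_e8, g2C_e9,
      g2C_e10, g2C_e11, g2C_e12, g2C_e13, E7, Matrix.single, Matrix.smul_apply,
      Matrix.add_apply, Matrix.sub_apply, Matrix.neg_apply, Matrix.of_apply, smul_eq_mul] at h
    first
      | exact h
      | exact h.symm
      | linarith
  have h12 : g 12 = 0 := by
    have h := entry 0 5
    simp [g2C_e0, g2C_e1, g2C_e2, g2C_e3, g2C_e4, g2C_e5, g2C_e6, g2C_e7, g2C_e8, g2C_e9,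
      g2C_e10, g2C_e11, g2C_e12, g2C_e13, E7, Matrix.single, Matrix.smul_apply,
      Matrix.add_apply, Matrix.sub_apply, Matrix.neg_apply, Matrix.of_apply, smul_eq_mul] at h
    first
      | exact h
      | exact h.symm
      | linarith
  have h13 : g 13 = 0 := by
    have h := entry 0 6
    simp [g2C_e0, g2C_e1, g2C_e2, g2C_e3, g2C_e4, g2C_e5, g2C_e6, g2C_e7, g2C_e8, g2C_e9,
      g2C_e10, g2C_e11, g2C_e12, g2C_e13, E7, Matrix.single, Matrix.smul_apply,
      Matrix.add_apply, Matrix.sub_apply, Matrix.neg_apply, Matrix.of_apply, smul_eq_mul] at h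
    first
      | exact h
      | exact h.symm
      | linarith
  have h3 : g 3 = 0 := by
    have h := entry 1 6
    simp [g2C_e0, g2C_e1, g2C_e2, g2C_e3, g2C_e4, g2C_e5, g2C_e6, g2C_e7, g2C_e8, g2C_e9,
      g2C_e10, g2C_e11, g2C_e12, g2C_e13, E7, Matrix.single, Matrix.smul_apply,
      Matrix.add_apply, Matrix.sub_apply, Matrix.neg_apply, Matrix.of_apply, smul_eq_mul,
      h10] at h
    linarith
  have h4 : g 4 = 0 := by
    have h := entry 1 5
    simp [g2C_e0, g2C_e1, g2C_e2, g2C_e3, g2C_e4, g2C_e5, g2C_e6, g2C_e7, g2C_e8, g2C_e9,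
      g2C_e10, g2C_e11, g2C_e12, g2C_e13, E7, Matrix.single, Matrix.smul_apply,
      Matrix.add_apply, Matrix.sub_apply, Matrix.neg_apply, Matrix.of_apply, smul_eq_mul,
      h11] at h
    linarith
  have h5 : g 5 = 0 := by
    have h := entry 1 4
    simp [g2C_e0, g2C_e1, g2C_e2, g2C_e3, g2C_e4, g2C_e5, g2C_e6, g2C_e7, g2C_e8, g2C_e9,
      g2C_e10, g2C_e11, g2C_e12, g2C_e13, E7, Matrix.single, Matrix.smul_apply,
      Matrix.add_apply, Matrix.sub_apply, Matrix.neg_apply, Matrix.of_apply, smul_eq_mul,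
      h12] at h
    linarith
  have h6 : g 6 = 0 := by
    have h := entry 1 3
    simp [g2C_e0, g2C_e1, g2C_e2, g2C_e3, g2C_e4, g2C_e5, g2C_e6, g2C_e7, g2C_e8, g2C_e9,
      g2C_e10, g2C_e11, g2C_e12, g2C_e13, E7, Matrix.single, Matrix.smul_apply,
      Matrix.add_apply, Matrix.sub_apply, Matrix.neg_apply, Matrix.of_apply, smul_eq_mul,
      h13] at h
    linarith
  have h0 : g 0 = 0 := by
    have h := entry 3 6
    simp [g2C_e0, g2C_e1, g2C_e2, g2C_e3, g2C_e4, g2C_e5, g2C_e6, g2C_e7, g2C_e8, g2C_e9,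
      g2C_e10, g2C_e11, g2C_e12, g2C_e13, E7, Matrix.single, Matrix.smul_apply,
      Matrix.add_apply, Matrix.sub_apply, Matrix.neg_apply, Matrix.of_apply, smul_eq_mul,
      h8] at h
    linarith
  have h1 : g 1 = 0 := by
    have h := entry 3 5
    simp [g2C_e0, g2C_e1, g2C_e2, g2C_e3, g2C_e4, g2C_e5, g2C_e6, g2C_e7, g2C_e8, g2C_e9,
      g2C_e10, g2C_e11, g2C_e12, g2C_e13, E7, Matrix.single, Matrix.smul_apply,
      Matrix.add_apply, Matrix.sub_apply, Matrix.neg_apply, Matrix.of_apply, smul_eq_mul,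
      h9] at h
    linarith
  have h2 : g 2 = 0 := by
    have h := entry 3 4
    simp [g2C_e0, g2C_e1, g2C_e2, g2C_e3, g2C_e4, g2C_e5, g2C_e6, g2C_e7, g2C_e8, g2C_e9,
      g2C_e10, g2C_e11, g2C_e12, g2C_e13, E7, Matrix.single, Matrix.smul_apply,
      Matrix.add_apply, Matrix.sub_apply, Matrix.neg_apply, Matrix.of_apply, smul_eq_mul,
      h7] at h
    linarith
  intro i
  fin_cases i <;> assumption

/-- The fourteen matrices `C₁,…,C₁₄` are linearly independent,
their span is closed under the matrix commutator (hence is a 14-dimensional real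
Lie algebra, the compact form `g₂` in its 7-dimensional representation), and the
Killing form of this Lie algebra is negative definite. -/
theorem g2_matrices_lie_algebra :
    LinearIndependent ℝ g2C ∧
    (∀ x ∈ Submodule.span ℝ (Set.range g2C), ∀ y ∈ Submodule.span ℝ (Set.range g2C),
        ⁅x, y⁆ ∈ Submodule.span ℝ (Set.range g2C)) ∧
    (∀ L : LieSubalgebra ℝ (Matrix (Fin 7) (Fin 7) ℝ),
        L.toSubmodule = Submodule.span ℝ (Set.range g2C) →
        ∀ x : L, x ≠ 0 → killingForm ℝ L x x < 0) := by
  refine ⟨g2C_linearIndependent, ?_, ?_⟩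
  · -- closure under bracket
    intro x hx
    induction hx using Submodule.span_induction with
    | mem x hxm =>
      intro y hy
      induction hy using Submodule.span_induction with
      | mem y hym =>
        obtain ⟨i, rfl⟩ := hxm
        obtain ⟨j, rfl⟩ := hym
        exact g2C_bracket_mem i j
      | zero => rw [lie_zero]; exact Submodule.zero_mem _
      | add y z _ _ hy hz => rw [lie_add]; exact Submodule.add_mem _ hy hz
      | smul c y _ hy => rw [lie_smul]; exact Submodule.smul_mem _ _ hy
    | zero => intro y _; rw [zero_lie]; exact Submodule.zero_mem _
    | add x z _ _ hx hz => intro y hy; rw [add_lie]; exact Submodule.add_mem _ (hx y hy) (hz y hy)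
    | smul c x _ hx => intro y hy; rw [smul_lie]; exact Submodule.smul_mem _ _ (hx y hy)
  · -- Killing form negative definite
    intro L hL x hx
    have hmem : ∀ i, g2C i ∈ L := by
      intro i
      have : g2C i ∈ L.toSubmodule := by
        rw [hL]; exact Submodule.subset_span ⟨i, rfl⟩
      exact this
    set bb : Fin 14 → L := fun i => ⟨g2C i, hmem i⟩ with hbb
    have hli : LinearIndependent ℝ bb :=
      LinearIndependent.of_comp (L.toSubmodule.subtype) g2C_linearIndependent
    have hsp : ⊤ ≤ Submodule.span ℝ (Set.range bb) := by
      intro z _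
      have hz : (z : Matrix (Fin 7) (Fin 7) ℝ) ∈ Submodule.span ℝ (Set.range g2C) := by
        rw [← hL]; exact z.2
      rw [Submodule.mem_span_range_iff_exists_fun] at hz
      obtain ⟨c, hc⟩ := hz
      rw [Submodule.mem_span_range_iff_exists_fun]
      refine ⟨c, ?_⟩
      apply Subtype.ext
      have : ((∑ i, c i • bb i : L) : Matrix (Fin 7) (Fin 7) ℝ) = ∑ i, c i • g2C i := by
        rw [AddSubmonoidClass.coe_finset_sum]
        exact Finset.sum_congr rfl fun i _ => rfl
      rw [this]
      exact hc
    let b : Module.Basis (Fin 14) ℝ L := Module.Basis.mk hli hsp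
    have hb : ∀ i, b i = bb i := fun i => Module.Basis.mk_apply hli hsp i
    have hbrL : ∀ i j, ⁅b i, b j⁆ = ∑ k, g2r i j k • b k := by
      intro i j
      apply Subtype.ext
      rw [LieSubalgebra.coe_bracket]
      have hcoe : ((∑ k, g2r i j k • b k : L) : Matrix (Fin 7) (Fin 7) ℝ)
          = ∑ k, g2r i j k • g2C k := by
        rw [AddSubmonoidClass.coe_finset_sum]
        refine Finset.sum_congr rfl fun k _ => ?_
        rw [hb k]
        rfl
      rw [hcoe, hb i, hb j]
      exact g2C_bracket i j
    have hM : ∀ i, (LinearMap.toMatrix b b) (LieAlgebra.ad ℝ L (b i))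
        = Matrix.of fun k j => g2r i j k := by
      intro i
      ext k j
      rw [LinearMap.toMatrix_apply, LieAlgebra.ad_apply, hbrL i j]
      have := congrFun (b.repr_sum_self (fun k' => g2r i j k')) k
      simpa using this
    have hκ : ∀ i j, killingForm ℝ L (b i) (b j) = if i = j then (-16 : ℝ) else 0 := by
      intro i j
      rw [killingForm_apply_apply, LinearMap.trace_eq_matrix_trace ℝ b,
        LinearMap.toMatrix_comp b b b, hM i, hM j]
      rw [← g2r_trace i j]
      simp [Matrix.trace, Matrix.diag, Matrix.mul_apply, Matrix.of_apply]
    have hrepr := b.sum_repr x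
    have hval : killingForm ℝ L x x = -16 * ∑ i, (b.repr x i) ^ 2 := by
      conv_lhs => rw [← hrepr]
      simp only [map_sum, _root_.map_smul, LinearMap.sum_apply, LinearMap.smul_apply,
        smul_eq_mul, hκ, mul_ite, mul_zero, Finset.sum_ite_eq, Finset.sum_ite_eq',
        Finset.mem_univ, if_true]
      rw [Finset.mul_sum]
      exact Finset.sum_congr rfl fun i _ => by ring
    have hex : ∃ i, b.repr x i ≠ 0 := by
      by_contra hcon
      push_neg at hcon
      apply hx
      rw [← hrepr]
      exact Finset.sum_eq_zero fun i _ => by rw [hcon i, zero_smul]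
    obtain ⟨i0, hi0⟩ := hex
    have hpos : 0 < ∑ i, (b.repr x i) ^ 2 :=
      Finset.sum_pos' (fun i _ => sq_nonneg _) ⟨i0, Finset.mem_univ _, by positivity⟩
    rw [hval]
    nlinarith
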